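/- Define, for k > 0 and Dtheta in [-pi, pi] with 1 + k^2 + 2k*cos(Dtheta) > 0, the function Dtheta_plus(k, Dtheta) = sign(Dtheta) * arccos( (1 + k*cos(Dtheta)) / sqrt(1 + k^2 + 2k*cos(Dtheta)) ) - (k/(1+k)) * Dtheta. Then: (i) Dtheta_plus(k, Dtheta) > 0 whenever k > 1 and 0 < Dtheta <= pi; (ii) Dtheta_plus(k, Dtheta) < 0 whenever 0 < k < 1 and 0 < Dtheta <= pi; (iii) Dtheta_plus(k, Dtheta) < 0 whenever k > 1 and -pi <= Dtheta < 0; (iv) Dtheta_plus(k, Dtheta) > 0 whenever 0 < k < 1 and -pi <= Dtheta < 0. (Proposition 9, sign properties.) -/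
import Mathlib


noncomputable section

/-- The difference between the posterior mean angle of the MFD-based Bayesian filter and that
of the CGD-based Bayesian filter. -/
def DthetaPlus (k Dtheta : ℝ) : ℝ :=
  Real.sign Dtheta *
      Real.arccos ((1 + k * Real.cos Dtheta) /
        Real.sqrt (1 + k ^ 2 + 2 * k * Real.cos Dtheta)) -
    k / (1 + k) * Dtheta

open Real Set

private lemma tan_mul_lt {c b : ℝ} (hc0 : 0 < c) (hc1 : c < 1) (hb0 : 0 < b) (hb : b < π/2) :
    Real.tan (c*b) < c * Real.tan b := by
  have key : StrictMonoOn (fun t => c * Real.tan t - Real.tan (c*t)) (Icc 0 b) := by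
    apply strictMonoOn_of_deriv_pos (convex_Icc 0 b)
    · intro x hx
      have hx1 : Real.cos x ≠ 0 := by
        have : Real.cos x > 0 := Real.cos_pos_of_mem_Ioo ⟨by nlinarith [hx.1, pi_pos], lt_of_le_of_lt hx.2 hb⟩
        linarith
      have hx2 : Real.cos (c*x) ≠ 0 := by
        have : Real.cos (c*x) > 0 := Real.cos_pos_of_mem_Ioo ⟨by nlinarith [hx.1, pi_pos], by nlinarith [hx.1, hx.2]⟩
        linarith
      exact ((Real.continuousAt_tan.2 hx1).const_smul c |>.sub
        ((Real.continuousAt_tan.2 hx2).comp (by fun_prop))).continuousWithinAt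
    · intro x hx
      rw [interior_Icc] at hx
      have hcx0 : 0 < c * x := mul_pos hc0 hx.1
      have hcxx : c * x < x := by nlinarith [hx.1]
      have hxlt : x < π/2 := lt_trans hx.2 hb
      have hC : 0 < Real.cos x := Real.cos_pos_of_mem_Ioo ⟨by linarith [pi_pos], hxlt⟩
      have hC2 : 0 < Real.cos (c*x) := Real.cos_pos_of_mem_Ioo ⟨by linarith [pi_pos], by linarith⟩
      have hlt : Real.cos x < Real.cos (c*x) :=
        Real.cos_lt_cos_of_nonneg_of_le_pi (le_of_lt hcx0) (by linarith [pi_pos, pi_gt_three]) hcxx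
      have hd : HasDerivAt (fun t => c * Real.tan t - Real.tan (c*t))
          (c * (1 / Real.cos x ^ 2) - (1 / Real.cos (c*x) ^ 2) * c) x := by
        exact ((Real.hasDerivAt_tan hC.ne').const_mul c).sub
          ((Real.hasDerivAt_tan hC2.ne').comp x (by simpa using (hasDerivAt_id x).const_mul c))
      rw [hd.deriv]
      have h1 : 1 / Real.cos (c*x) ^ 2 < 1 / Real.cos x ^ 2 := by
        apply one_div_lt_one_div_of_lt (by positivity)
        nlinarith
      nlinarith
  have h := key (left_mem_Icc.2 hb0.le) (right_mem_Icc.2 hb0.le) hb0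
  simp only [mul_zero, Real.tan_zero] at h
  linarith

private lemma arctan_lemma {c b : ℝ} (hc0 : 0 < c) (hc1 : c < 1) (hb0 : 0 < b) (hb : b < π/2) :
    c * b < Real.arctan (c * Real.tan b) := by
  have h := tan_mul_lt hc0 hc1 hb0 hb
  have h2 := Real.arctan_strictMono h
  rwa [Real.arctan_tan (by nlinarith [pi_pos]) (by nlinarith)] at h2

private lemma arccos_eq {k θ : ℝ} (hk : 0 < k) (h0 : 0 < θ) (hπ : θ < π) :
    Real.arccos ((1 + k * Real.cos θ) / Real.sqrt (1 + k ^ 2 + 2 * k * Real.cos θ)) =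
      θ/2 + Real.arctan ((k-1)/(k+1) * Real.tan (θ/2)) := by
  set t := θ/2 with ht_def
  set c := (k-1)/(k+1) with hc_def
  have hk1 : (0:ℝ) < k + 1 := by linarith
  have ht0 : 0 < t := by positivity
  have ht : t < π/2 := by rw [ht_def]; linarith
  have hC : 0 < Real.cos t := Real.cos_pos_of_mem_Ioo ⟨by linarith [pi_pos], ht⟩
  have hcabs : |c| < 1 := by
    rw [abs_div, abs_of_pos hk1, div_lt_one hk1]
    rw [abs_lt]; constructor <;> linarith
  set x := c * Real.tan t with hx_def
  have htan : 0 < Real.tan t := Real.tan_pos_of_pos_of_lt_pi_div_two ht0 ht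
  have habs : |x| < Real.tan t := by
    rw [hx_def, abs_mul, abs_of_pos htan]
    exact mul_lt_of_lt_one_left htan hcabs
  have harc1 : Real.arctan x < t := by
    have := Real.arctan_strictMono (lt_of_abs_lt habs)
    rwa [Real.arctan_tan (by linarith) ht] at this
  have harc2 : -t < Real.arctan x := by
    have h1 : -Real.tan t < x := neg_lt_of_abs_lt habs
    have := Real.arctan_strictMono h1
    rwa [show -Real.tan t = Real.tan (-t) by rw [Real.tan_neg], Real.arctan_tan (by linarith) (by linarith)] at this
  have hA0 : 0 ≤ t + Real.arctan x := by linarith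
  have hAπ : t + Real.arctan x ≤ π := by linarith
  have hcosθ : Real.cos θ = 2 * Real.cos t ^ 2 - 1 := by
    rw [show θ = 2 * t by rw [ht_def]; ring, Real.cos_two_mul]
  have hS2 : Real.sin t ^ 2 = 1 - Real.cos t ^ 2 := Real.sin_sq t
  set D := 1 + k ^ 2 + 2 * k * Real.cos θ with hD_def
  have hDpos : 0 < D := by
    have : Real.cos t ^ 2 > 0 := by positivity
    rw [hD_def, hcosθ]; nlinarith [sq_nonneg (k-1), mul_pos hk this]
  have hsx : Real.sqrt (1 + x ^ 2) = Real.sqrt D / ((k+1) * Real.cos t) := by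
    have h1 : 1 + x ^ 2 = D / ((k+1) * Real.cos t) ^ 2 := by
      rw [hx_def, hc_def, Real.tan_eq_sin_div_cos, hD_def, hcosθ]
      field_simp
      nlinarith [hS2, sq_nonneg (Real.sin t), sq_nonneg (Real.cos t)]
    rw [h1, Real.sqrt_div hDpos.le, Real.sqrt_sq (by positivity)]
  have hnum : Real.cos t - Real.sin t * x = (1 + k * Real.cos θ) / ((k+1) * Real.cos t) := by
    rw [hx_def, hc_def, Real.tan_eq_sin_div_cos, hcosθ]
    field_simp
    nlinarith [hS2]
  have hcosA : Real.cos (t + Real.arctan x) = (1 + k * Real.cos θ) / Real.sqrt D := by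
    have hsD : 0 < Real.sqrt D := Real.sqrt_pos.2 hDpos
    rw [Real.cos_add, Real.cos_arctan, Real.sin_arctan]
    have hre : Real.cos t * (1 / Real.sqrt (1+x^2)) - Real.sin t * (x / Real.sqrt (1+x^2))
        = (Real.cos t - Real.sin t * x) / Real.sqrt (1+x^2) := by ring
    rw [hre, hnum, hsx]
    rw [div_div_div_cancel_right₀]
    positivity
  rw [← hcosA, Real.arccos_cos hA0 hAπ]

private lemma main_pos {k θ : ℝ} (hk : 0 < k) (h0 : 0 < θ) (hπ : θ ≤ π) :
    (1 < k → k/(1+k)*θ <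
      Real.arccos ((1 + k * Real.cos θ) / Real.sqrt (1 + k ^ 2 + 2 * k * Real.cos θ))) ∧
    (k < 1 →
      Real.arccos ((1 + k * Real.cos θ) / Real.sqrt (1 + k ^ 2 + 2 * k * Real.cos θ)) <
      k/(1+k)*θ) := by
  have hk1 : (0:ℝ) < 1 + k := by linarith
  rcases eq_or_lt_of_le hπ with hEq | hlt
  · -- θ = π
    subst hEq
    rw [Real.cos_pi]
    constructor
    · intro hk2
      have hD : 1 + k ^ 2 + 2 * k * (-1 : ℝ) = (k-1)^2 := by ring
      rw [hD, Real.sqrt_sq (by linarith)]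
      have : (1 + k * (-1)) / (k - 1) = -1 := by
        rw [div_eq_iff (by linarith : k - 1 ≠ (0:ℝ))]; ring
      rw [this, Real.arccos_neg_one]
      rw [div_mul_eq_mul_div, div_lt_iff₀ hk1]
      nlinarith [pi_pos]
    · intro hk2
      have hD : 1 + k ^ 2 + 2 * k * (-1 : ℝ) = (1-k)^2 := by ring
      rw [hD, Real.sqrt_sq (by linarith)]
      have : (1 + k * (-1)) / (1 - k) = 1 := by
        rw [div_eq_iff (by linarith : 1 - k ≠ (0:ℝ))]; ring
      rw [this, Real.arccos_one]
      positivity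
  · -- 0 < θ < π
    rw [arccos_eq hk h0 hlt]
    have ht0 : 0 < θ/2 := by linarith
    have ht : θ/2 < π/2 := by linarith
    constructor
    · intro hk2
      have hc0 : 0 < (k-1)/(k+1) := div_pos (by linarith) (by linarith)
      have hc1 : (k-1)/(k+1) < 1 := by rw [div_lt_one (by linarith)]; linarith
      have h := arctan_lemma hc0 hc1 ht0 ht
      have heq : k/(1+k)*θ = θ/2 + (k-1)/(k+1) * (θ/2) := by
        field_simp
        ring
      linarith
    · intro hk2
      have hc0 : 0 < (1-k)/(k+1) := by
        apply div_pos <;> linarith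
      have hc1 : (1-k)/(k+1) < 1 := by rw [div_lt_one (by linarith)]; linarith
      have h := arctan_lemma hc0 hc1 ht0 ht
      have hneg : (k-1)/(k+1) * Real.tan (θ/2) = -((1-k)/(k+1) * Real.tan (θ/2)) := by ring
      rw [hneg, Real.arctan_neg]
      have heq : k/(1+k)*θ = θ/2 - (1-k)/(k+1) * (θ/2) := by
        field_simp
        ring
      linarith

private lemma dtheta_odd (k θ : ℝ) : DthetaPlus k (-θ) = -DthetaPlus k θ := by
  unfold DthetaPlus
  rw [Real.cos_neg, Real.sign_neg]
  ring

/-- Proposition 9 (sign properties of `DthetaPlus`). -/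
theorem stmt6 (k Dtheta : ℝ) (hk : 0 < k)
    (hd1 : -Real.pi ≤ Dtheta) (hd2 : Dtheta ≤ Real.pi)
    (hpos : 0 < 1 + k ^ 2 + 2 * k * Real.cos Dtheta) :
    ((1 < k ∧ 0 < Dtheta) → 0 < DthetaPlus k Dtheta) ∧
    ((k < 1 ∧ 0 < Dtheta) → DthetaPlus k Dtheta < 0) ∧
    ((1 < k ∧ Dtheta < 0) → DthetaPlus k Dtheta < 0) ∧
    ((k < 1 ∧ Dtheta < 0) → 0 < DthetaPlus k Dtheta) := by
  have hposD : ∀ θ : ℝ, 0 < θ → θ ≤ π → DthetaPlus k θ =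
      Real.arccos ((1 + k * Real.cos θ) / Real.sqrt (1 + k ^ 2 + 2 * k * Real.cos θ)) -
      k / (1 + k) * θ := by
    intro θ hθ _
    unfold DthetaPlus
    rw [Real.sign_of_pos hθ, one_mul]
  refine ⟨?_, ?_, ?_, ?_⟩
  · rintro ⟨hk2, hθ⟩
    rw [hposD _ hθ hd2]
    have := (main_pos hk hθ hd2).1 hk2
    linarith
  · rintro ⟨hk2, hθ⟩
    rw [hposD _ hθ hd2]
    have := (main_pos hk hθ hd2).2 hk2
    linarith
  · rintro ⟨hk2, hθ⟩
    have h1 : 0 < -Dtheta := by linarith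
    have h2 : -Dtheta ≤ π := by linarith
    have := (main_pos hk h1 h2).1 hk2
    rw [show Dtheta = -(-Dtheta) by ring, dtheta_odd, hposD _ h1 h2]
    rw [Real.cos_neg] at this ⊢
    linarith
  · rintro ⟨hk2, hθ⟩
    have h1 : 0 < -Dtheta := by linarith
    have h2 : -Dtheta ≤ π := by linarith
    have := (main_pos hk h1 h2).2 hk2
    rw [show Dtheta = -(-Dtheta) by ring, dtheta_odd, hposD _ h1 h2]
    rw [Real.cos_neg] at this ⊢
    linarith
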